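/- Let x ∈ (0,1) and ℓ ≥ 1 be real. For every t with 0 ≤ t ≤ x^{−1/2}, one has (t + 1/ℓ)/(1 + xℓt) ≤ x^{−1/2}. Consequently, if L : ℕ → ℝ satisfies L_n ≥ 1 for all n, η is a sequence of nonnegative functions satisfying η_n(x) = (η_{n+1}(x) + 1/L_n)/(1 + x·L_n·η_{n+1}(x)) for all n, and η_N(x) ≤ x^{−1/2} for some N, then η_n(x) ≤ x^{−1/2} for all n ≤ N. -/

import Mathlib

lemma step_bound (x ℓ : ℝ) (hx : x ∈ Set.Ioo (0:ℝ) 1) (hℓ : 1 ≤ ℓ)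
    (t : ℝ) (ht : 0 ≤ t) (hts : t ≤ x ^ (-(1:ℝ)/2)) :
    (t + 1/ℓ) / (1 + x*ℓ*t) ≤ x ^ (-(1:ℝ)/2) := by
  obtain ⟨hx0, hx1⟩ := hx
  set s := x ^ (-(1:ℝ)/2) with hs
  have hspos : 0 < s := Real.rpow_pos_of_pos hx0 _
  have hss : x * s * s = 1 := by
    have : s * s = x ^ ((-(1:ℝ)/2) + (-(1:ℝ)/2)) := (Real.rpow_add hx0 _ _).symm
    have h2 : (-(1:ℝ)/2) + (-(1:ℝ)/2) = -1 := by norm_num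
    rw [h2] at this
    have : s * s = x⁻¹ := by rw [this, Real.rpow_neg_one]
    field_simp [ne_of_gt hx0] at this ⊢
    linarith [this]
  have hℓ0 : 0 < ℓ := lt_of_lt_of_le one_pos hℓ
  have hden : 0 < 1 + x*ℓ*t := by positivity
  rw [div_le_iff₀ hden]
  have hs1 : 1 < s := by
    by_contra h
    push_neg at h
    have : x * s * s ≤ x := by
      nlinarith [mul_nonneg (mul_nonneg hx0.le hspos.le) (sub_nonneg.2 h),
        mul_nonneg hx0.le (sub_nonneg.2 h)]
    linarith
  have hkey : 0 ≤ s*(ℓ*s-1) + ℓ*t*(ℓ-s) := by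
    rcases le_total s ℓ with h | h
    · have h1 : 0 ≤ ℓ*t*(ℓ-s) := by
        apply mul_nonneg (mul_nonneg hℓ0.le ht); linarith
      nlinarith
    · have hid : s*(ℓ*s-1) + ℓ*t*(ℓ-s) = s*(ℓ^2-1) + ℓ*(s-t)*(s-ℓ) := by ring
      rw [hid]
      have h1 : 0 ≤ ℓ*(s-t)*(s-ℓ) := by
        apply mul_nonneg (mul_nonneg hℓ0.le (by linarith)); linarith
      nlinarith [mul_nonneg (mul_nonneg hspos.le (sub_nonneg.2 hℓ)) (by linarith : (0:ℝ) ≤ ℓ+1)]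
  have hD : ℓ*s*(s * (1 + x*ℓ*t) - (t + 1/ℓ)) = s*(ℓ*s-1) + ℓ*t*(ℓ-s) := by
    field_simp
    ring_nf
    linear_combination (ℓ^2*t) * hss
  have hprod : 0 ≤ ℓ*s*(s * (1 + x*ℓ*t) - (t + 1/ℓ)) := hD ▸ hkey
  have hls : 0 < ℓ*s := mul_pos hℓ0 hspos
  nlinarith [hprod]

/-- The map `t ↦ (t + 1/ℓ)/(1 + xℓt)` preserves the bound `t ≤ x^{-1/2}`, and hence
the universal upper bound `η_n(x) ≤ x^{-1/2}` propagates through the multigraph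
recursion from `N` down to any `n ≤ N`. -/
theorem stmt_4 (x ℓ : ℝ) (hx : x ∈ Set.Ioo (0:ℝ) 1) (hℓ : 1 ≤ ℓ) :
    (∀ t : ℝ, 0 ≤ t → t ≤ x ^ (-(1:ℝ)/2) →
      (t + 1/ℓ) / (1 + x*ℓ*t) ≤ x ^ (-(1:ℝ)/2)) ∧
    ∀ L : ℕ → ℝ, (∀ n : ℕ, 1 ≤ L n) →
      ∀ η : ℕ → ℝ, (∀ n : ℕ, 0 ≤ η n) →
        (∀ n : ℕ, η n = (η (n+1) + 1 / L n) / (1 + x * L n * η (n+1))) →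
        ∀ N : ℕ, η N ≤ x ^ (-(1:ℝ)/2) →
          ∀ n : ℕ, n ≤ N → η n ≤ x ^ (-(1:ℝ)/2) := by
  refine ⟨fun t ht hts => step_bound x ℓ hx hℓ t ht hts, ?_⟩
  intro L hL η hη hrec N hN n hn
  have key : ∀ m : ℕ, η (N - m) ≤ x ^ (-(1:ℝ)/2) := by
    intro m
    induction m with
    | zero => simpa using hN
    | succ m ih =>
      rcases le_or_gt N m with h | h
      · have he : N - (m+1) = N - m := by omega
        rw [he]; exact ih
      · have he : N - (m+1) + 1 = N - m := by omega
        have := hrec (N - (m+1))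
        rw [he] at this
        rw [this]
        exact step_bound x (L (N - (m+1))) hx (hL _) _ (hη _) ih
  have : n = N - (N - n) := by omega
  rw [this]; exact key _
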